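/- Let A ∈ ℝ^{m×n}, let S, T ⊆ {1,…,m} be disjoint subsets, and let B = A − π_S(A). Then det(A_{S∪T} A_{S∪T}^T) = det(A_S A_S^T) · det(B_T B_T^T). -/

import Mathlib

open Matrix BigOperators

noncomputable def projSpan {m n : ℕ} (A : Matrix (Fin m) (Fin n) ℝ) (S : Finset (Fin m)) :
    Matrix (Fin m) (Fin n) ℝ := fun i j =>
  (Submodule.orthogonalProjectionOnto
      (Submodule.span ℝ (Set.range (fun s : S => (WithLp.equiv 2 (Fin n → ℝ)).symm (A s))))
      ((WithLp.equiv 2 (Fin n → ℝ)).symm (A i)) : EuclideanSpace ℝ (Fin n)) j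

def rowSub {m n : ℕ} (A : Matrix (Fin m) (Fin n) ℝ) (S : Finset (Fin m)) :
    Matrix {x // x ∈ S} (Fin n) ℝ := fun i j => A i.1 j

noncomputable def gramDet {m n : ℕ} (A : Matrix (Fin m) (Fin n) ℝ) (S : Finset (Fin m)) : ℝ :=
  (rowSub A S * (rowSub A S)ᵀ).det

noncomputable def frobSq {m n : ℕ} (M : Matrix (Fin m) (Fin n) ℝ) : ℝ :=
  ∑ i, ∑ j, (M i j)^2

noncomputable def specNorm {m n : ℕ} (M : Matrix (Fin m) (Fin n) ℝ) : ℝ :=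
  ‖LinearMap.toContinuousLinearMap (Matrix.toEuclideanLin M)‖

/-- Let A ∈ ℝ^{m×n}, S, T ⊆ {1,…,m} disjoint, B = A − π_S(A).
Then det(A_{S∪T} A_{S∪T}ᵀ) = det(A_S A_Sᵀ) · det(B_T B_Tᵀ). -/
theorem det_division {m n : ℕ} (A : Matrix (Fin m) (Fin n) ℝ) (S T : Finset (Fin m))
    (hST : Disjoint S T) (B : Matrix (Fin m) (Fin n) ℝ) (hB : B = A - projSpan A S) :
    gramDet A (S ∪ T) = gramDet A S * gramDet B T := by
  classical
  set K : Submodule ℝ (EuclideanSpace ℝ (Fin n)) :=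
    Submodule.span ℝ (Set.range (fun s : S => (WithLp.equiv 2 (Fin n → ℝ)).symm (A s))) with hK
  -- coefficients expressing the projection of each row as a combination of S-rows
  have hmem : ∀ i : Fin m,
      ((Submodule.orthogonalProjectionOnto K ((WithLp.equiv 2 (Fin n → ℝ)).symm (A i)) : EuclideanSpace ℝ (Fin n))) ∈ K :=
    fun i => (Submodule.orthogonalProjectionOnto K _).2
  have hex : ∀ i : Fin m, ∃ c : {x // x ∈ S} → ℝ,
      (∑ s : {x // x ∈ S}, c s • ((WithLp.equiv 2 (Fin n → ℝ)).symm (A s.1) : EuclideanSpace ℝ (Fin n))) =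
        (Submodule.orthogonalProjectionOnto K ((WithLp.equiv 2 (Fin n → ℝ)).symm (A i)) : EuclideanSpace ℝ (Fin n)) := by
    intro i
    have := hmem i
    rw [hK, Submodule.mem_span_range_iff_exists_fun] at this
    exact this
  choose c hc using hex
  -- the projection row coordinates
  have hproj : ∀ (i : Fin m) (j : Fin n), projSpan A S i j = ∑ s : {x // x ∈ S}, c i s * A s.1 j := by
    intro i j
    have h2 : ∀ x : EuclideanSpace ℝ (Fin n), x j = EuclideanSpace.proj (𝕜 := ℝ) j x := fun _ => rfl
    have := congrArg (EuclideanSpace.proj (𝕜 := ℝ) j) (hc i)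
    rw [map_sum] at this
    rw [projSpan]
    calc (↑((Submodule.orthogonalProjectionOnto K) ((WithLp.equiv 2 (Fin n → ℝ)).symm (A i))) : EuclideanSpace ℝ (Fin n)) j
        = (EuclideanSpace.proj (𝕜 := ℝ) j)
            (↑((Submodule.orthogonalProjectionOnto K) ((WithLp.equiv 2 (Fin n → ℝ)).symm (A i)))) := rfl
      _ = ∑ s : {x // x ∈ S}, c i s * A s.1 j := by
          rw [← this]
          simp [WithLp.equiv_symm_apply, PiLp.toLp_apply]
  -- orthogonality: B-rows are orthogonal to S-rows
  have horth : ∀ (i : Fin m) (s : Fin m), s ∈ S → ∑ j, A s j * B i j = 0 := by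
    intro i s hs
    have hmemK : ((WithLp.equiv 2 (Fin n → ℝ)).symm (A s) : EuclideanSpace ℝ (Fin n)) ∈ K := by
      rw [hK]
      exact Submodule.subset_span ⟨⟨s, hs⟩, rfl⟩
    have h0 : ((WithLp.equiv 2 (Fin n → ℝ)).symm (A i) : EuclideanSpace ℝ (Fin n)) -
        (Submodule.orthogonalProjectionOnto K ((WithLp.equiv 2 (Fin n → ℝ)).symm (A i)) : EuclideanSpace ℝ (Fin n)) ∈ Kᗮ :=
      Submodule.sub_starProjection_mem_orthogonal _
    have := h0 _ hmemK
    rw [real_inner_comm] at this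
    rw [PiLp.inner_apply] at this
    simp [hB, projSpan, sub_mul, mul_comm, Submodule.starProjection_apply, -Submodule.coe_orthogonalProjectionOnto_apply] at this ⊢
    convert this using 5
    · rfl
    · exact 2
  -- equivalence between S ⊕ T and S ∪ T
  have hdis : ∀ x : Fin m, x ∈ T → x ∉ S := fun x hx hs => Finset.disjoint_left.mp hST hs hx
  let e : {x // x ∈ S} ⊕ {x // x ∈ T} ≃ {x // x ∈ S ∪ T} :=
    { toFun := fun i => Sum.elim (fun s => ⟨s.1, Finset.mem_union_left _ s.2⟩)
        (fun t => ⟨t.1, Finset.mem_union_right _ t.2⟩) i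
      invFun := fun x => if h : x.1 ∈ S then Sum.inl ⟨x.1, h⟩ else
        Sum.inr ⟨x.1, (Finset.mem_union.mp x.2).resolve_left h⟩
      left_inv := by
        rintro (s | t)
        · simp
        · simp [hdis t.1 t.2]
      right_inv := by
        intro x
        by_cases h : x.1 ∈ S <;> simp [h] }
  set X := rowSub A S with hX
  set Y := rowSub A T with hY
  set Y' := rowSub B T with hY'
  set C : Matrix {x // x ∈ T} {x // x ∈ S} ℝ := fun t s => -(c t.1 s) with hC
  set E : Matrix ({x // x ∈ S} ⊕ {x // x ∈ T}) ({x // x ∈ S} ⊕ {x // x ∈ T}) ℝ :=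
    fromBlocks 1 0 C 1 with hE
  have h1 : fromRows X Y' = E * fromRows X Y := by
    rw [hE, fromBlocks_mul_fromRows]
    ext i j
    cases i with
    | inl s => simp
    | inr t =>
        simp only [fromRows_apply_inr, Matrix.add_apply, Matrix.one_mul, mul_apply]
        rw [hY', hC, hX, hY]
        simp only [rowSub, hB, Matrix.sub_apply, hproj]
        simp [neg_mul, Finset.sum_neg_distrib, sub_eq_neg_add]
  have h4 : gramDet A (S ∪ T) = ((fromRows X Y) * (fromRows X Y)ᵀ).det := by
    rw [gramDet, ← Matrix.det_submatrix_equiv_self e]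
    congr 1
    ext i j
    cases i <;> cases j <;> rfl
  have h5 : ((fromRows X Y') * (fromRows X Y')ᵀ).det = ((fromRows X Y) * (fromRows X Y)ᵀ).det := by
    rw [h1, Matrix.transpose_mul, ← Matrix.mul_assoc, Matrix.mul_assoc E]
    rw [Matrix.det_mul, Matrix.det_mul, Matrix.det_transpose, hE,
      Matrix.det_fromBlocks_zero₁₂]
    simp
  have h3 : (fromRows X Y') * (fromRows X Y')ᵀ = fromBlocks (X * Xᵀ) 0 0 (Y' * Y'ᵀ) := by
    have hz1 : X * Y'ᵀ = 0 := by
      ext s t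
      simp only [mul_apply, hX, hY', rowSub, Matrix.transpose_apply, Matrix.zero_apply]
      exact horth t.1 s.1 s.2
    have hz2 : Y' * Xᵀ = 0 := by
      ext t s
      simp only [mul_apply, hX, hY', rowSub, Matrix.transpose_apply, Matrix.zero_apply]
      rw [← horth t.1 s.1 s.2]
      exact Finset.sum_congr rfl fun j _ => mul_comm _ _
    rw [transpose_fromRows, fromRows_mul_fromCols, hz1, hz2]
  rw [h4, ← h5, h3, Matrix.det_fromBlocks_zero₂₁, gramDet, gramDet]
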